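/- Let 𝔫 be an ideal of a Lie algebra 𝔤, č ∈ 𝔤*, c = č|_𝔫, and Z ∈ 𝔫_c (i.e. Z ∈ 𝔫 with ⟨c,[𝔫,Z]⟩ = 0). Then ad(Z)ⁿ(𝔤) ⊆ [𝔫_c, 𝔫] for all n ≥ 2, and consequently for the coadjoint action, ⟨exp(Z)(č), Z'⟩ = ⟨č + Z(č), Z'⟩ for all Z' ∈ 𝔤, i.e. exp(Z) acts on č as translation by Z(č) = ⟨č,[·,Z]⟩. -/

import Mathlib

/- STATEMENT 13: Let 𝔫 be an ideal of a Lie algebra 𝔤, m ∈ 𝔤*, c = m|_𝔫, and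
Z ∈ 𝔫_c.  Then ad(Z)ⁿ(𝔤) ⊆ [𝔫_c, 𝔫] for all n ≥ 2, and consequently, for the
coadjoint action given by the exponential series,
⟨exp(Z)(m), Z'⟩ = ⟨m + Z(m), Z'⟩ for all Z' ∈ 𝔤, where Z(m) = ⟨m,[·,Z]⟩. -/

theorem stmt_13 {𝔤 : Type*} [LieRing 𝔤] [LieAlgebra ℝ 𝔤]
    (𝔫 : LieIdeal ℝ 𝔤) (m : Module.Dual ℝ 𝔤)
    (Z : 𝔤) (hZ𝔫 : Z ∈ 𝔫)
    (hZc : ∀ W ∈ 𝔫, m ⁅W, Z⁆ = 0) :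
    (∀ n : ℕ, 2 ≤ n → ∀ W : 𝔤,
      ((LieAlgebra.ad ℝ 𝔤 Z) ^ n) W ∈
        Submodule.span ℝ {V : 𝔤 | ∃ A ∈ 𝔫, (∀ W' ∈ 𝔫, m ⁅W', A⁆ = 0) ∧
          ∃ B ∈ 𝔫, V = ⁅A, B⁆}) ∧
    ∀ Z' : 𝔤,
      (∑' n : ℕ, ((-1 : ℝ) ^ n / n.factorial) •
          m (((LieAlgebra.ad ℝ 𝔤 Z) ^ n) Z'))
        = m Z' + m ⁅Z', Z⁆ := by
  -- For n ≥ 1, ad(Z)^n W ∈ 𝔫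
  have hmem : ∀ n : ℕ, 1 ≤ n → ∀ W : 𝔤, ((LieAlgebra.ad ℝ 𝔤 Z) ^ n) W ∈ 𝔫 := by
    intro n hn W
    induction n with
    | zero => omega
    | succ k ih =>
      rcases Nat.eq_or_lt_of_le hn with h | h
      · obtain rfl : k = 0 := by omega
        simp only [zero_add, pow_one, LieAlgebra.ad_apply]
        rw [show (⁅Z, W⁆ : 𝔤) = -⁅W, Z⁆ from (lie_skew Z W).symm]
        exact 𝔫.neg_mem (𝔫.lie_mem hZ𝔫)
      · have hk : 1 ≤ k := by omega
        have := ih hk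
        rw [pow_succ']
        simp only [Module.End.mul_apply, LieAlgebra.ad_apply]
        exact 𝔫.lie_mem this
  -- m vanishes on ad(Z)^n W for n ≥ 2
  have hzero : ∀ n : ℕ, 2 ≤ n → ∀ W : 𝔤, m (((LieAlgebra.ad ℝ 𝔤 Z) ^ n) W) = 0 := by
    intro n hn W
    obtain ⟨k, rfl⟩ : ∃ k, n = k + 1 := ⟨n - 1, by omega⟩
    have hk : 1 ≤ k := by omega
    rw [pow_succ']
    simp only [Module.End.mul_apply, LieAlgebra.ad_apply]
    rw [show (⁅Z, ((LieAlgebra.ad ℝ 𝔤 Z) ^ k) W⁆ : 𝔤)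
        = -⁅((LieAlgebra.ad ℝ 𝔤 Z) ^ k) W, Z⁆ from
          (lie_skew Z (((LieAlgebra.ad ℝ 𝔤 Z) ^ k) W)).symm]
    rw [map_neg, hZc _ (hmem k hk W), neg_zero]
  constructor
  · intro n hn W
    obtain ⟨k, rfl⟩ : ∃ k, n = k + 1 := ⟨n - 1, by omega⟩
    have hk : 1 ≤ k := by omega
    apply Submodule.subset_span
    refine ⟨Z, hZ𝔫, hZc, ((LieAlgebra.ad ℝ 𝔤 Z) ^ k) W, hmem k hk W, ?_⟩
    rw [pow_succ']
    simp [LieAlgebra.ad_apply]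
  · intro Z'
    have hsum : (∑' n : ℕ, ((-1 : ℝ) ^ n / n.factorial) •
          m (((LieAlgebra.ad ℝ 𝔤 Z) ^ n) Z'))
        = ∑ n ∈ Finset.range 2, ((-1 : ℝ) ^ n / n.factorial) •
          m (((LieAlgebra.ad ℝ 𝔤 Z) ^ n) Z') := by
      apply tsum_eq_sum
      intro n hn
      rw [hzero n (by simp at hn; omega) Z', smul_zero]
    rw [hsum]
    simp only [Finset.sum_range_succ, Finset.sum_range_zero, pow_zero, pow_one,
      Nat.factorial_zero, Nat.factorial_one, Nat.cast_one, LieAlgebra.ad_apply]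
    rw [show (⁅Z, Z'⁆ : 𝔤) = -⁅Z', Z⁆ from (lie_skew Z Z').symm, map_neg]
    simp only [smul_eq_mul, Module.End.one_apply]
    ring
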